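/- Assume the Bregman PDMM setup (see context) specialized to the entropic case: 𝒳 is the probability simplex Δ_n (n ≥ 2), φ = φ_1 = … = φ_m is the negative entropy φ(u) = Σ_{k=1}^n u_k ln u_k, all iterates x_i^t, y_i^t lie in the relative interior of Δ_n (strictly positive entries), γ = 1/4, τ = ρ/2, ν^0 = 0, and x_i^0 = y_i^0 = (1/n)𝟙 for all i (the uniform vector). Let x* ∈ Δ_n be a consensus point (x*_i = x* for all i), δ_max = max_i δ_i, T ≥ 1, and x̄_i^T = (1/T) Σ_{t=1}^T x_i^t. Then Σ_{i=1}^m f_i(x̄_i^T) − Σ_{i=1}^m f_i(x*) ≤ m(ρ + δ_max) ln(n) / T. -/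

import Mathlib

open scoped RealInnerProductSpace BigOperators

/-- The probability simplex in ℝ^n. -/
def probSimplex (n : ℕ) : Set (EuclideanSpace ℝ (Fin n)) :=
  {u | (∀ k, 0 ≤ u k) ∧ ∑ k, u k = 1}

/-- The gradient of the negative entropy `φ(u) = Σ_k u_k ln u_k`, namely
`∇φ(u)_k = ln u_k + 1` (valid at points with positive entries). -/
noncomputable def negEntGrad {n : ℕ} (u : EuclideanSpace ℝ (Fin n)) :
    EuclideanSpace ℝ (Fin n) :=
  WithLp.toLp 2 (fun k => Real.log (u k) + 1)

/-! ### Auxiliary scalar lemmas -/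

lemma sc1 {a v : ℝ} (ha : 0 ≤ a) (hv : 0 < v) :
    a - v ≤ a * Real.log a - a * Real.log v := by
  rcases eq_or_lt_of_le ha with h | h
  · simp [← h, hv.le]
  · have h1 : Real.log (v / a) ≤ v / a - 1 := Real.log_le_sub_one_of_pos (by positivity)
    have h2 : Real.log (v / a) = Real.log v - Real.log a := Real.log_div hv.ne' h.ne'
    have h3 : a * (Real.log v - Real.log a) ≤ a * (v / a - 1) :=
      mul_le_mul_of_nonneg_left (h2 ▸ h1) ha
    have h4 : a * (v / a - 1) = v - a := by field_simp
    nlinarith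

/-- scalar strong convexity of `x log x` on `(0,1]`. -/
lemma sc2 {a b : ℝ} (ha : 0 < a) (ha1 : a ≤ 1) (hb : 0 < b) (hb1 : b ≤ 1) :
    (a - b)^2/2 ≤ a * Real.log a - b * Real.log b - (Real.log b + 1) * (a - b) := by
  set F : ℝ → ℝ := fun z => z * Real.log z - b * Real.log b - (Real.log b + 1) * (z - b)
      - (z - b)^2/2 with hF
  have hFb : F b = 0 := by simp [hF]
  have hderiv : ∀ z : ℝ, 0 < z →
      HasDerivAt F (Real.log z - Real.log b - z + b) z := by
    intro z hz
    have h1 := Real.hasDerivAt_mul_log hz.ne'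
    have h2 : HasDerivAt (fun w : ℝ => (Real.log b + 1) * (w - b)) (Real.log b + 1) z := by
      simpa using (((hasDerivAt_id z).sub_const b).const_mul (Real.log b + 1))
    have h3 : HasDerivAt (fun w : ℝ => (w - b)^2/2) (z - b) z := by
      have := (((hasDerivAt_id z).sub_const b).pow 2).div_const 2
      simpa using this
    have := ((h1.sub_const (b * Real.log b)).sub h2).sub h3
    exact this.congr_deriv (by ring)
  have hcont : ∀ c d : ℝ, 0 < c → ContinuousOn F (Set.Icc c d) := by
    intro c d hc
    have h1 : ContinuousOn (fun z : ℝ => z * Real.log z) (Set.Icc c d) := by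
      apply ContinuousOn.mul continuousOn_id
      apply Real.continuousOn_log.mono
      intro z hz
      simp only [Set.mem_compl_iff, Set.mem_singleton_iff]
      exact (lt_of_lt_of_le hc hz.1).ne'
    exact ((h1.sub continuousOn_const).sub
      ((continuous_const.mul (continuous_id.sub continuous_const)).continuousOn)).sub
      ((((continuous_id.sub continuous_const).pow 2).div_const 2).continuousOn)
  rcases le_total b a with hba | hab
  · have hmono : MonotoneOn F (Set.Icc b a) := by
      apply monotoneOn_of_deriv_nonneg (convex_Icc b a) (hcont b a hb)
      · intro z hz
        rw [interior_Icc] at hz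
        exact ((hderiv z (hb.trans hz.1)).differentiableAt).differentiableWithinAt
      · intro z hz
        rw [interior_Icc] at hz
        have hz0 : 0 < z := hb.trans hz.1
        rw [(hderiv z hz0).deriv]
        have hz1 : z ≤ 1 := hz.2.le.trans ha1
        have h4 : Real.log (b / z) ≤ b / z - 1 := Real.log_le_sub_one_of_pos (by positivity)
        have h5 : Real.log (b / z) = Real.log b - Real.log z := Real.log_div hb.ne' hz0.ne'
        have h45 : z * (Real.log b - Real.log z) ≤ b - z := by
          have := mul_le_mul_of_nonneg_left (h5 ▸ h4) hz0.le
          calc z * (Real.log b - Real.log z) ≤ z * (b / z - 1) := this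
            _ = b - z := by field_simp
        nlinarith [mul_nonneg (sub_nonneg.2 hz.1.le) (sub_nonneg.2 hz1)]
    have := hmono (Set.left_mem_Icc.2 hba) ⟨hba, le_refl a⟩ hba
    rw [hFb] at this
    simpa [hF] using this
  · have hmono : AntitoneOn F (Set.Icc a b) := by
      apply antitoneOn_of_deriv_nonpos (convex_Icc a b) (hcont a b ha)
      · intro z hz
        rw [interior_Icc] at hz
        exact ((hderiv z (ha.trans hz.1)).differentiableAt).differentiableWithinAt
      · intro z hz
        rw [interior_Icc] at hz
        have hz0 : 0 < z := ha.trans hz.1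
        rw [(hderiv z hz0).deriv]
        have h4 : Real.log (z / b) ≤ z / b - 1 := Real.log_le_sub_one_of_pos (by positivity)
        have h5 : Real.log (z / b) = Real.log z - Real.log b := Real.log_div hz0.ne' hb.ne'
        have h45 : b * (Real.log z - Real.log b) ≤ z - b := by
          have := mul_le_mul_of_nonneg_left (h5 ▸ h4) hb.le
          calc b * (Real.log z - Real.log b) ≤ b * (z / b - 1) := this
            _ = z - b := by field_simp
        nlinarith [mul_nonneg (sub_nonneg.2 hz.2.le) (sub_nonneg.2 hb1)]
    have := hmono (Set.left_mem_Icc.2 hab) ⟨hab, le_refl b⟩ hab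
    rw [hFb] at this
    simpa [hF] using this

/-! ### Auxiliary matrix lemmas -/

lemma dot_mulVec_eq {q : ℕ} (M : Matrix (Fin q) (Fin q) ℝ) (v w : Fin q → ℝ) :
    dotProduct v (M.mulVec w) = ∑ i, ∑ j, M i j * (v i * w j) := by
  refine Finset.sum_congr rfl fun i _ => ?_
  show v i * ∑ j, M i j * w j = _
  rw [Finset.mul_sum]
  exact Finset.sum_congr rfl fun j _ => by ring

lemma psd_one_sub {q : ℕ} {P : Matrix (Fin q) (Fin q) ℝ} (hPsym : P.IsSymm)
    (hPnn : ∀ i j, 0 ≤ P i j) (hProw : ∀ i, ∑ j, P i j = 1) (hPpsd : P.PosSemidef) :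
    (1 - P).PosSemidef := by
  have hcol : ∀ j, ∑ i, P i j = 1 := by
    intro j
    calc ∑ i, P i j = ∑ i, P j i := Finset.sum_congr rfl fun i _ => (hPsym.apply i j).symm ▸ rfl
      _ = 1 := hProw j
  refine Matrix.PosSemidef.of_dotProduct_mulVec_nonneg ?_ ?_
  · exact (Matrix.isHermitian_one).sub hPpsd.1
  · intro v
    have hv : star v = v := by simp
    rw [hv]
    have expand : dotProduct v ((1 - P).mulVec v)
        = ∑ i, v i * v i - ∑ i, ∑ j, P i j * (v i * v j) := by
      rw [Matrix.sub_mulVec, dotProduct_sub, Matrix.one_mulVec, dot_mulVec_eq]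
      rfl
    rw [expand]
    have e1 : ∑ i, ∑ j, P i j * (v i * v i) / 2 = ∑ i, v i * v i / 2 := by
      refine Finset.sum_congr rfl fun i _ => ?_
      rw [← Finset.sum_div, ← Finset.sum_mul, hProw, one_mul]
    have e2 : ∑ i, ∑ j, P i j * (v j * v j) / 2 = ∑ j, v j * v j / 2 := by
      rw [Finset.sum_comm]
      refine Finset.sum_congr rfl fun j _ => ?_
      rw [← Finset.sum_div, ← Finset.sum_mul, hcol, one_mul]
    have key : ∑ i, ∑ j, P i j * (v i * v j) ≤ ∑ i, v i * v i := by
      calc ∑ i, ∑ j, P i j * (v i * v j)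
          ≤ ∑ i, ∑ j, (P i j * (v i * v i) / 2 + P i j * (v j * v j) / 2) := by
            refine Finset.sum_le_sum fun i _ => Finset.sum_le_sum fun j _ => ?_
            nlinarith [mul_nonneg (hPnn i j) (sq_nonneg (v i - v j))]
        _ = ∑ i, v i * v i := by
            simp only [Finset.sum_add_distrib]
            rw [e1, e2, ← Finset.sum_add_distrib]
            exact Finset.sum_congr rfl fun i _ => by ring
    linarith

lemma matfact {q : ℕ} {P : Matrix (Fin q) (Fin q) ℝ} (hPsym : P.IsSymm)
    (hPnn : ∀ i j, 0 ≤ P i j) (hProw : ∀ i, ∑ j, P i j = 1) (hPpsd : P.PosSemidef)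
    (z : Fin q → ℝ) :
    ∑ i, (∑ j, P i j * z j)^2 ≤ ∑ i, ∑ j, P i j * (z i * z j) := by
  have hQ := psd_one_sub hPsym hPnn hProw hPpsd
  obtain ⟨S, hSH, hS2⟩ : ∃ S : Matrix (Fin q) (Fin q) ℝ, S.conjTranspose = S ∧ S * S = P := by
    open scoped MatrixOrder in
    obtain ⟨X, hX, -, hXX⟩ := CFC.exists_sqrt_of_isSelfAdjoint_of_quasispectrumRestricts
      hPpsd.isHermitian (QuasispectrumRestricts.nnreal_of_nonneg hPpsd.nonneg)
    exact ⟨X, hX, hXX⟩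
  have hps : (S * (1 - P) * S).PosSemidef := by
    have := hQ.mul_mul_conjTranspose_same S
    rwa [hSH] at this
  have hid : S * (1 - P) * S = P - P * P := by
    rw [← hS2]; noncomm_ring
  rw [hid] at hps
  have h0 := hps.dotProduct_mulVec_nonneg z
  have hz : star z = z := by simp
  rw [hz, Matrix.sub_mulVec, dotProduct_sub] at h0
  have e3 : dotProduct z (P.mulVec z) = ∑ i, ∑ j, P i j * (z i * z j) :=
    dot_mulVec_eq P z z
  have e4 : dotProduct z ((P * P).mulVec z) = ∑ i, (∑ j, P i j * z j)^2 := by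
    rw [← Matrix.mulVec_mulVec, dot_mulVec_eq, Finset.sum_comm]
    refine Finset.sum_congr rfl fun j _ => ?_
    have hu : P.mulVec z j = ∑ i, P j i * z i := rfl
    calc ∑ i, P i j * (z i * P.mulVec z j)
        = (∑ i, P i j * z i) * P.mulVec z j := by
          rw [Finset.sum_mul]; exact Finset.sum_congr rfl fun i _ => by ring
      _ = (∑ i, P j i * z i) * P.mulVec z j := by
          congr 1; exact Finset.sum_congr rfl fun i _ => by rw [hPsym.apply i j]
      _ = (∑ i, P j i * z i)^2 := by rw [hu, sq]
  rw [e3, e4] at h0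
  linarith

/-! ### Euclidean space helpers -/

lemma es_sum_apply {n : ℕ} {ι : Type*} [DecidableEq ι] (s : Finset ι)
    (v : ι → EuclideanSpace ℝ (Fin n)) (k : Fin n) :
    (∑ j ∈ s, v j) k = ∑ j ∈ s, v j k := by
  induction s using Finset.induction with
  | empty => rfl
  | insert a s h ih => rw [Finset.sum_insert h, Finset.sum_insert h, ← ih]; rfl

lemma es_inner_eq_sum {n : ℕ} (u v : EuclideanSpace ℝ (Fin n)) : ⟪u, v⟫ = ∑ k, u k * v k := by
  rw [PiLp.inner_apply]; simp [RCLike.inner_apply, mul_comm]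

/-! ### Bregman divergence of the negative entropy -/

noncomputable def Bd {n : ℕ} (u v : EuclideanSpace ℝ (Fin n)) : ℝ :=
  ∑ k, (u k * Real.log (u k) - v k * Real.log (v k) - (Real.log (v k) + 1) * (u k - v k))

lemma Bd_nonneg {n : ℕ} {u v : EuclideanSpace ℝ (Fin n)}
    (hu : ∀ k, 0 ≤ u k) (hv : ∀ k, 0 < v k) : 0 ≤ Bd u v := by
  refine Finset.sum_nonneg fun k _ => ?_
  have h := sc1 (hu k) (hv k)
  nlinarith

lemma Bd_strong {n : ℕ} {u v : EuclideanSpace ℝ (Fin n)}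
    (hu : ∀ k, 0 < u k) (hu1 : ∀ k, u k ≤ 1) (hv : ∀ k, 0 < v k) (hv1 : ∀ k, v k ≤ 1) :
    ∑ k, (u k - v k)^2 / 2 ≤ Bd u v :=
  Finset.sum_le_sum fun k _ => sc2 (hu k) (hu1 k) (hv k) (hv1 k)

lemma three_point {n : ℕ} (a b c : EuclideanSpace ℝ (Fin n)) :
    ⟪negEntGrad a - negEntGrad b, c - a⟫ = Bd c b - Bd c a - Bd a b := by
  rw [es_inner_eq_sum]
  unfold Bd
  rw [← Finset.sum_sub_distrib, ← Finset.sum_sub_distrib]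
  refine Finset.sum_congr rfl fun k _ => ?_
  have e1 : (negEntGrad a - negEntGrad b) k = Real.log (a k) - Real.log (b k) := by
    show negEntGrad a k - negEntGrad b k = _
    unfold negEntGrad; simp only [PiLp.toLp_apply]; ring
  have e2 : (c - a) k = c k - a k := rfl
  rw [e1, e2]; ring

lemma simplex_le_one {n : ℕ} {u : EuclideanSpace ℝ (Fin n)} (hu : u ∈ probSimplex n) :
    ∀ k, u k ≤ 1 := by
  intro k
  have := Finset.single_le_sum (f := fun k => u k) (fun j _ => hu.1 j) (Finset.mem_univ k)
  rw [hu.2] at this; exact this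

lemma Bd_uniform_le {n : ℕ} (hn : 1 ≤ n) {u : EuclideanSpace ℝ (Fin n)}
    (hu : u ∈ probSimplex n) :
    Bd u (WithLp.toLp 2 (fun _ => 1 / (n : ℝ)) : EuclideanSpace ℝ (Fin n)) ≤ Real.log n := by
  have hn0 : (0 : ℝ) < n := by exact_mod_cast hn
  have hlog : Real.log (1 / (n : ℝ)) = - Real.log n := by
    rw [one_div, Real.log_inv]
  unfold Bd
  simp only [PiLp.toLp_apply]
  have expand : ∀ k : Fin n,
      u k * Real.log (u k) - (1/(n:ℝ)) * Real.log (1/(n:ℝ))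
        - (Real.log (1/(n:ℝ)) + 1) * (u k - 1/(n:ℝ))
      = u k * Real.log (u k) + (Real.log n) * (u k) - u k + 1/(n:ℝ) := by
    intro k
    rw [hlog]; ring
  rw [Finset.sum_congr rfl fun k _ => expand k]
  have s1 : ∑ k : Fin n, (u k * Real.log (u k) + Real.log n * u k - u k + 1/(n:ℝ))
      = (∑ k, u k * Real.log (u k)) + Real.log n * (∑ k, u k) - (∑ k, u k)
        + (n : ℝ) * (1/(n:ℝ)) := by
    rw [Finset.sum_add_distrib, Finset.sum_sub_distrib, Finset.sum_add_distrib,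
      ← Finset.mul_sum, Finset.sum_const, Finset.card_univ, Fintype.card_fin,
      nsmul_eq_mul]
  rw [s1, hu.2]
  have hneg : ∑ k, u k * Real.log (u k) ≤ 0 := by
    refine Finset.sum_nonpos fun k _ => ?_
    exact mul_nonpos_of_nonneg_of_nonpos (hu.1 k) (Real.log_nonpos (hu.1 k) (simplex_le_one hu k))
  have hinv : (n:ℝ) * (1/(n:ℝ)) = 1 := by field_simp
  rw [hinv]
  linarith

set_option maxHeartbeats 2000000 in
/-- Corollary 1, objective bound: entropic Bregman PDMM on the probability
simplex achieves `Σ_i f_i(x̄_i^T) − Σ_i f_i(x*) ≤ m (ρ + δ_max) ln(n) / T`. -/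
theorem entropic_bregman_pdmm_rate {n m : ℕ} (hn : 2 ≤ n)
    (f : Fin m → EuclideanSpace ℝ (Fin n) → ℝ)
    (hf : ∀ i, ConvexOn ℝ Set.univ (f i))
    (P : Matrix (Fin m) (Fin m) ℝ) (hPsym : P.IsSymm)
    (hPnn : ∀ i j, 0 ≤ P i j) (hProw : ∀ i, ∑ j, P i j = 1) (hPpsd : P.PosSemidef)
    (ρ τ γ : ℝ) (δ : Fin m → ℝ)
    (hρ : 0 < ρ) (hτ : τ = ρ / 2) (hγ : γ = 1 / 4) (hδ : ∀ i, 0 ≤ δ i)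
    (x y ν : ℕ → Fin m → EuclideanSpace ℝ (Fin n))
    (hxΔ : ∀ t i, x t i ∈ probSimplex n) (hyΔ : ∀ t i, y t i ∈ probSimplex n)
    (hxpos : ∀ t i k, 0 < x t i k) (hypos : ∀ t i k, 0 < y t i k)
    (hmirror : ∀ t : ℕ, ∀ i, ∀ u ∈ probSimplex n,
      0 ≤ ∑ j, P i j * ⟪negEntGrad (y t i) - negEntGrad (x t j), u - y t i⟫)
    (hprimal : ∀ t : ℕ, ∀ i, ∃ g : EuclideanSpace ℝ (Fin n),
      (∀ v ∈ probSimplex n, 0 ≤ ⟪g, x (t + 1) i - v⟫) ∧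
      ∀ v, f i v ≥ f i (x (t + 1) i) +
        ⟪-ν t i + (∑ j, P i j • ν t j)
            - ρ • (negEntGrad (x (t + 1) i) - negEntGrad (y t i))
            - δ i • (negEntGrad (x (t + 1) i) - negEntGrad (x t i))
            - g, v - x (t + 1) i⟫)
    (hdual : ∀ t : ℕ, ∀ i, ν (t + 1) i =
      ν t i + τ • (x (t + 1) i - ∑ j, P i j • x (t + 1) j))
    (hν0 : ∀ i, ν 0 i = 0)
    (hx0 : ∀ i k, x 0 i k = 1 / (n : ℝ)) (hy0 : ∀ i k, y 0 i k = 1 / (n : ℝ))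
    (xstar : EuclideanSpace ℝ (Fin n)) (hxstar : xstar ∈ probSimplex n)
    (δmax : ℝ) (hδmax : IsGreatest (Set.range δ) δmax)
    (T : ℕ) (hT : 1 ≤ T)
    (xbar : Fin m → EuclideanSpace ℝ (Fin n))
    (hxbar : ∀ i, xbar i = (1 / (T : ℝ)) • ∑ t ∈ Finset.Icc 1 T, x t i) :
    (∑ i, f i (xbar i)) - ∑ i, f i xstar ≤
      (m : ℝ) * (ρ + δmax) * Real.log n / (T : ℝ) := by
  have hτpos : 0 < τ := by rw [hτ]; linarith
  have hcol : ∀ j, ∑ i, P i j = 1 := by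
    intro j
    calc ∑ i, P i j = ∑ i, P j i := Finset.sum_congr rfl fun i _ => hPsym.apply j i
      _ = 1 := hProw j
  -- Lyapunov function
  set L : ℕ → ℝ := fun t => (1/(2*τ)) * (∑ i, ∑ k, (ν t i k)^2)
      + ρ * (∑ i, Bd xstar (y t i)) + ∑ i, δ i * Bd xstar (x t i) with hL
  have step : ∀ t : ℕ, (∑ i, (f i (x (t+1) i) - f i xstar)) ≤ L t - L (t+1) := by
    intro t
    choose g hg1 hg2 using hprimal t
    -- (A) per-agent primal inequality
    have A : ∀ i, f i (x (t+1) i) - f i xstar ≤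
        ⟪-ν t i + (∑ j, P i j • ν t j), x (t+1) i - xstar⟫
        + ρ * (Bd xstar (y t i) - Bd xstar (x (t+1) i))
        + δ i * (Bd xstar (x t i) - Bd xstar (x (t+1) i)) := by
      intro i
      have hsub := hg2 i xstar
      have hexp : ⟪-ν t i + (∑ j, P i j • ν t j)
            - ρ • (negEntGrad (x (t + 1) i) - negEntGrad (y t i))
            - δ i • (negEntGrad (x (t + 1) i) - negEntGrad (x t i))
            - g i, xstar - x (t + 1) i⟫
          = ⟪-ν t i + (∑ j, P i j • ν t j), xstar - x (t+1) i⟫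
            - ρ * (Bd xstar (y t i) - Bd xstar (x (t+1) i) - Bd (x (t+1) i) (y t i))
            - δ i * (Bd xstar (x t i) - Bd xstar (x (t+1) i) - Bd (x (t+1) i) (x t i))
            - ⟪g i, xstar - x (t+1) i⟫ := by
        rw [inner_sub_left, inner_sub_left, inner_sub_left, real_inner_smul_left,
          real_inner_smul_left, three_point, three_point]
      have hflip : ∀ u : EuclideanSpace ℝ (Fin n),
          ⟪u, xstar - x (t+1) i⟫ = -⟪u, x (t+1) i - xstar⟫ := by
        intro u
        rw [← inner_neg_right, neg_sub]
      have hgpos : 0 ≤ ⟪g i, x (t + 1) i - xstar⟫ := hg1 i xstar hxstar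
      have hB1 : 0 ≤ Bd (x (t+1) i) (y t i) :=
        Bd_nonneg (fun k => (hxpos (t+1) i k).le) (hypos t i)
      have hB2 : 0 ≤ Bd (x (t+1) i) (x t i) :=
        Bd_nonneg (fun k => (hxpos (t+1) i k).le) (hxpos t i)
      rw [hexp, hflip, hflip (g i)] at hsub
      have hδρ1 : 0 ≤ ρ * Bd (x (t+1) i) (y t i) := mul_nonneg hρ.le hB1
      have hδρ2 : 0 ≤ δ i * Bd (x (t+1) i) (x t i) := mul_nonneg (hδ i) hB2
      nlinarith [hsub]
    -- (B) sum the per-agent inequalities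
    have sumA : (∑ i, (f i (x (t+1) i) - f i xstar))
        ≤ (∑ i, ⟪-ν t i + (∑ j, P i j • ν t j), x (t+1) i - xstar⟫)
          + ρ * ((∑ i, Bd xstar (y t i)) - (∑ i, Bd xstar (x (t+1) i)))
          + ((∑ i, δ i * Bd xstar (x t i)) - (∑ i, δ i * Bd xstar (x (t+1) i))) := by
      calc (∑ i, (f i (x (t+1) i) - f i xstar))
          ≤ ∑ i, (⟪-ν t i + (∑ j, P i j • ν t j), x (t+1) i - xstar⟫
            + ρ * (Bd xstar (y t i) - Bd xstar (x (t+1) i))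
            + δ i * (Bd xstar (x t i) - Bd xstar (x (t+1) i))) :=
            Finset.sum_le_sum fun i _ => A i
        _ = _ := by
            simp only [Finset.sum_add_distrib]
            rw [← Finset.mul_sum, Finset.sum_sub_distrib]
            congr 2
            rw [← Finset.sum_sub_distrib]
            exact Finset.sum_congr rfl fun i _ => by ring
    -- (C) rewrite the dual term
    have hDS : (∑ i, ⟪-ν t i + (∑ j, P i j • ν t j), x (t+1) i - xstar⟫)
        = - ∑ i, ⟪ν t i, x (t+1) i - ∑ j, P i j • x (t+1) j⟫ := by
      have e1 : ∀ i, ⟪-ν t i + (∑ j, P i j • ν t j), x (t+1) i - xstar⟫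
          = -⟪ν t i, x (t+1) i - xstar⟫
            + ∑ j, P i j * ⟪ν t j, x (t+1) i - xstar⟫ := by
        intro i
        rw [inner_add_left, inner_neg_left, sum_inner]
        congr 1
        exact Finset.sum_congr rfl fun j _ => real_inner_smul_left _ _ _
      have e2 : ∑ i, ∑ j, P i j * ⟪ν t j, x (t+1) i - xstar⟫
          = ∑ i, ⟪ν t i, ∑ j, P i j • (x (t+1) j - xstar)⟫ := by
        rw [Finset.sum_comm]
        refine Finset.sum_congr rfl fun j _ => ?_
        rw [inner_sum]
        refine Finset.sum_congr rfl fun i _ => ?_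
        rw [real_inner_smul_right, hPsym.apply j i]
      have e3 : ∀ i : Fin m, (∑ j, P i j • (x (t+1) j - xstar))
          = (∑ j, P i j • x (t+1) j) - xstar := by
        intro i
        simp only [smul_sub]
        rw [Finset.sum_sub_distrib, ← Finset.sum_smul, hProw, one_smul]
      calc ∑ i, ⟪-ν t i + (∑ j, P i j • ν t j), x (t+1) i - xstar⟫
          = ∑ i, (-⟪ν t i, x (t+1) i - xstar⟫
              + ∑ j, P i j * ⟪ν t j, x (t+1) i - xstar⟫) :=
            Finset.sum_congr rfl fun i _ => e1 i
        _ = (∑ i, -⟪ν t i, x (t+1) i - xstar⟫)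
            + ∑ i, ∑ j, P i j * ⟪ν t j, x (t+1) i - xstar⟫ := Finset.sum_add_distrib
        _ = (∑ i, -⟪ν t i, x (t+1) i - xstar⟫)
            + ∑ i, ⟪ν t i, (∑ j, P i j • x (t+1) j) - xstar⟫ := by
            rw [e2]
            congr 1
            exact Finset.sum_congr rfl fun i _ => by rw [e3 i]
        _ = - ∑ i, ⟪ν t i, x (t+1) i - ∑ j, P i j • x (t+1) j⟫ := by
            rw [← Finset.sum_add_distrib, ← Finset.sum_neg_distrib]
            refine Finset.sum_congr rfl fun i _ => ?_
            have harg : x (t+1) i - ∑ j, P i j • x (t+1) j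
                = (x (t+1) i - xstar) - ((∑ j, P i j • x (t+1) j) - xstar) := by abel
            rw [harg]
            simp only [inner_sub_right]
            ring
    -- (D) dual energy identity
    have hnu : ∀ i : Fin m, -⟪ν t i, x (t+1) i - ∑ j, P i j • x (t+1) j⟫
        = (1/(2*τ)) * ((∑ k, (ν t i k)^2) - (∑ k, (ν (t+1) i k)^2))
          + (τ/2) * ∑ k, ((x (t+1) i - ∑ j, P i j • x (t+1) j) k)^2 := by
      intro i
      have hsq : ∀ k, (ν (t+1) i k)^2 = (ν t i k)^2
          + 2*τ*(ν t i k * (x (t+1) i - ∑ j, P i j • x (t+1) j) k)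
          + τ^2 * ((x (t+1) i - ∑ j, P i j • x (t+1) j) k)^2 := by
        intro k
        rw [hdual t i]
        have : (ν t i + τ • (x (t + 1) i - ∑ j, P i j • x (t + 1) j)) k
            = ν t i k + τ * (x (t + 1) i - ∑ j, P i j • x (t + 1) j) k := rfl
        rw [this]; ring
      have hsum : (∑ k, (ν (t+1) i k)^2) = (∑ k, (ν t i k)^2)
          + 2*τ*(∑ k, ν t i k * (x (t+1) i - ∑ j, P i j • x (t+1) j) k)
          + τ^2 * ∑ k, ((x (t+1) i - ∑ j, P i j • x (t+1) j) k)^2 := by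
        rw [Finset.sum_congr rfl fun k _ => hsq k, Finset.sum_add_distrib,
          Finset.sum_add_distrib, ← Finset.mul_sum, ← Finset.mul_sum]
      rw [es_inner_eq_sum, hsum]
      field_simp
      ring
    -- coordinates of the disagreement vector
    have hwk : ∀ (i : Fin m) (k : Fin n), (x (t+1) i - ∑ j, P i j • x (t+1) j) k
        = x (t+1) i k - ∑ j, P i j * x (t+1) j k := by
      intro i k
      have h1 : (x (t+1) i - ∑ j, P i j • x (t+1) j) k
          = x (t+1) i k - (∑ j, P i j • x (t+1) j) k := rfl
      rw [h1, es_sum_apply]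
      exact congrArg (fun s => x (t+1) i k - s) (Finset.sum_congr rfl fun j _ => rfl)
    -- (E) bound on the disagreement energy
    have hW : ∑ i, ∑ k, ((x (t+1) i - ∑ j, P i j • x (t+1) j) k)^2
        ≤ ∑ i, ∑ j, P i j * ∑ k, (y (t+1) i k - x (t+1) j k)^2 := by
      have E1 : ∑ i, ∑ k, ((x (t+1) i - ∑ j, P i j • x (t+1) j) k)^2
          = (∑ i, ∑ k, (x (t+1) i k)^2)
            - 2 * (∑ i, ∑ k, x (t+1) i k * (∑ j, P i j * x (t+1) j k))
            + ∑ i, ∑ k, (∑ j, P i j * x (t+1) j k)^2 := by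
        have hpt : ∀ (i : Fin m) (k : Fin n),
            ((x (t+1) i - ∑ j, P i j • x (t+1) j) k)^2
            = (x (t+1) i k)^2 - 2 * (x (t+1) i k * (∑ j, P i j * x (t+1) j k))
              + (∑ j, P i j * x (t+1) j k)^2 := by
          intro i k; rw [hwk i k]; ring
        rw [Finset.sum_congr rfl fun i _ => Finset.sum_congr rfl fun k _ => hpt i k]
        simp only [Finset.sum_add_distrib, Finset.sum_sub_distrib, ← Finset.mul_sum]
      have E2 : ∑ i, ∑ k, (∑ j, P i j * x (t+1) j k)^2
          ≤ ∑ i, ∑ k, x (t+1) i k * (∑ j, P i j * x (t+1) j k) := by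
        rw [Finset.sum_comm, Finset.sum_comm (s := Finset.univ) (t := Finset.univ)
          (f := fun i k => x (t+1) i k * (∑ j, P i j * x (t+1) j k))]
        refine Finset.sum_le_sum fun k _ => ?_
        have := matfact hPsym hPnn hProw hPpsd (fun i => x (t+1) i k)
        calc ∑ i, (∑ j, P i j * x (t+1) j k)^2
            ≤ ∑ i, ∑ j, P i j * (x (t+1) i k * x (t+1) j k) := this
          _ = ∑ i, x (t+1) i k * (∑ j, P i j * x (t+1) j k) := by
              refine Finset.sum_congr rfl fun i _ => ?_
              rw [Finset.mul_sum]
              exact Finset.sum_congr rfl fun j _ => by ring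
      have E3 : ∑ i, ∑ j, P i j * ∑ k, (y (t+1) i k - x (t+1) j k)^2
          = (∑ i, ∑ k, (y (t+1) i k - ∑ j, P i j * x (t+1) j k)^2)
            + (∑ i, ∑ k, (x (t+1) i k)^2)
            - ∑ i, ∑ k, (∑ j, P i j * x (t+1) j k)^2 := by
        have c1 : ∀ (i : Fin m) (k : Fin n),
            ∑ j, P i j * (y (t+1) i k - x (t+1) j k)^2
            = (y (t+1) i k)^2 - 2 * (y (t+1) i k * (∑ j, P i j * x (t+1) j k))
              + ∑ j, P i j * (x (t+1) j k)^2 := by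
          intro i k
          have hpt : ∀ j, P i j * (y (t+1) i k - x (t+1) j k)^2
              = P i j * (y (t+1) i k)^2 - 2 * (y (t+1) i k * (P i j * x (t+1) j k))
                + P i j * (x (t+1) j k)^2 := fun j => by ring
          rw [Finset.sum_congr rfl fun j _ => hpt j, Finset.sum_add_distrib,
            Finset.sum_sub_distrib, ← Finset.sum_mul, hProw, one_mul, ← Finset.mul_sum,
            ← Finset.mul_sum]
        have c2 : ∀ i : Fin m, ∑ j, P i j * ∑ k, (y (t+1) i k - x (t+1) j k)^2
            = ∑ k, ∑ j, P i j * (y (t+1) i k - x (t+1) j k)^2 := by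
          intro i
          rw [Finset.sum_comm]
          exact Finset.sum_congr rfl fun j _ => Finset.mul_sum _ _ _
        have c3 : ∑ i, ∑ k, ∑ j, P i j * (x (t+1) j k)^2
            = ∑ i, ∑ k, (x (t+1) i k)^2 := by
          calc ∑ i, ∑ k, ∑ j, P i j * (x (t+1) j k)^2
              = ∑ i, ∑ j, P i j * ∑ k, (x (t+1) j k)^2 := by
                refine Finset.sum_congr rfl fun i _ => ?_
                rw [Finset.sum_comm]
                exact Finset.sum_congr rfl fun j _ => (Finset.mul_sum _ _ _).symm
            _ = ∑ j, (∑ i, P i j) * ∑ k, (x (t+1) j k)^2 := by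
                rw [Finset.sum_comm]
                exact Finset.sum_congr rfl fun j _ => (Finset.sum_mul _ _ _).symm
            _ = ∑ i, ∑ k, (x (t+1) i k)^2 := by
                refine Finset.sum_congr rfl fun j _ => ?_
                rw [hcol, one_mul]
        have c4 : ∑ i, ∑ k, (y (t+1) i k - ∑ j, P i j * x (t+1) j k)^2
            = (∑ i, ∑ k, (y (t+1) i k)^2)
              - 2 * (∑ i, ∑ k, y (t+1) i k * (∑ j, P i j * x (t+1) j k))
              + ∑ i, ∑ k, (∑ j, P i j * x (t+1) j k)^2 := by
          have hpt : ∀ (i : Fin m) (k : Fin n),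
              (y (t+1) i k - ∑ j, P i j * x (t+1) j k)^2
              = (y (t+1) i k)^2 - 2 * (y (t+1) i k * (∑ j, P i j * x (t+1) j k))
                + (∑ j, P i j * x (t+1) j k)^2 := fun i k => by ring
          rw [Finset.sum_congr rfl fun i _ => Finset.sum_congr rfl fun k _ => hpt i k]
          simp only [Finset.sum_add_distrib, Finset.sum_sub_distrib, ← Finset.mul_sum]
        have c5 : ∑ i, ∑ j, P i j * ∑ k, (y (t+1) i k - x (t+1) j k)^2
            = (∑ i, ∑ k, (y (t+1) i k)^2)
              - 2 * (∑ i, ∑ k, y (t+1) i k * (∑ j, P i j * x (t+1) j k))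
              + ∑ i, ∑ k, (x (t+1) i k)^2 := by
          rw [Finset.sum_congr rfl fun i _ => c2 i]
          rw [Finset.sum_congr rfl fun i _ => Finset.sum_congr rfl fun k _ => c1 i k]
          simp only [Finset.sum_add_distrib, Finset.sum_sub_distrib, ← Finset.mul_sum]
          rw [c3]
        rw [c4, c5]
        ring
      have E4 : 0 ≤ ∑ i, ∑ k, (y (t+1) i k - ∑ j, P i j * x (t+1) j k)^2 :=
        Finset.sum_nonneg fun i _ => Finset.sum_nonneg fun k _ => sq_nonneg _
      linarith
    -- strong convexity (Pinsker-type) bound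
    have hM2 : ∀ (i j : Fin m), ∑ k, (y (t+1) i k - x (t+1) j k)^2
        ≤ 2 * Bd (y (t+1) i) (x (t+1) j) := by
      intro i j
      have := Bd_strong (hypos (t+1) i) (simplex_le_one (hyΔ (t+1) i))
        (hxpos (t+1) j) (simplex_le_one (hxΔ (t+1) j))
      rw [← Finset.sum_div] at this
      linarith
    have hMnn : 0 ≤ ∑ i, ∑ j, P i j * Bd (y (t+1) i) (x (t+1) j) :=
      Finset.sum_nonneg fun i _ => Finset.sum_nonneg fun j _ =>
        mul_nonneg (hPnn i j) (Bd_nonneg (fun k => (hypos (t+1) i k).le) (hxpos (t+1) j))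
    have hWM : ∑ i, ∑ j, P i j * ∑ k, (y (t+1) i k - x (t+1) j k)^2
        ≤ 2 * ∑ i, ∑ j, P i j * Bd (y (t+1) i) (x (t+1) j) := by
      rw [Finset.mul_sum]
      refine Finset.sum_le_sum fun i _ => ?_
      rw [Finset.mul_sum]
      refine Finset.sum_le_sum fun j _ => ?_
      calc P i j * ∑ k, (y (t+1) i k - x (t+1) j k)^2
          ≤ P i j * (2 * Bd (y (t+1) i) (x (t+1) j)) :=
            mul_le_mul_of_nonneg_left (hM2 i j) (hPnn i j)
        _ = 2 * (P i j * Bd (y (t+1) i) (x (t+1) j)) := by ring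
    -- (F) mirror-averaging inequality at step t+1
    have hMir : ∑ i, ∑ j, P i j * Bd (y (t+1) i) (x (t+1) j)
        ≤ (∑ i, Bd xstar (x (t+1) i)) - (∑ i, Bd xstar (y (t+1) i)) := by
      have per : ∀ i : Fin m, 0 ≤ ∑ j, P i j * (Bd xstar (x (t+1) j)
          - Bd xstar (y (t+1) i) - Bd (y (t+1) i) (x (t+1) j)) := by
        intro i
        have hm := hmirror (t+1) i xstar hxstar
        calc (0:ℝ) ≤ ∑ j, P i j
            * ⟪negEntGrad (y (t+1) i) - negEntGrad (x (t+1) j), xstar - y (t+1) i⟫ := hm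
          _ = ∑ j, P i j * (Bd xstar (x (t+1) j)
              - Bd xstar (y (t+1) i) - Bd (y (t+1) i) (x (t+1) j)) :=
            Finset.sum_congr rfl fun j _ => by rw [three_point]
      have hsums : 0 ≤ ∑ i, ∑ j, P i j * (Bd xstar (x (t+1) j)
          - Bd xstar (y (t+1) i) - Bd (y (t+1) i) (x (t+1) j)) :=
        Finset.sum_nonneg fun i _ => per i
      have d1 : ∑ i, ∑ j, P i j * Bd xstar (x (t+1) j) = ∑ i, Bd xstar (x (t+1) i) := by
        rw [Finset.sum_comm]
        calc ∑ j, ∑ i, P i j * Bd xstar (x (t+1) j)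
            = ∑ j, (∑ i, P i j) * Bd xstar (x (t+1) j) :=
              Finset.sum_congr rfl fun j _ => (Finset.sum_mul _ _ _).symm
          _ = ∑ j, Bd xstar (x (t+1) j) := by
              refine Finset.sum_congr rfl fun j _ => ?_
              rw [hcol, one_mul]
      have d2 : ∑ i, ∑ j, P i j * Bd xstar (y (t+1) i) = ∑ i, Bd xstar (y (t+1) i) := by
        refine Finset.sum_congr rfl fun i _ => ?_
        rw [← Finset.sum_mul, hProw, one_mul]
      have expand : ∑ i, ∑ j, P i j * (Bd xstar (x (t+1) j)
          - Bd xstar (y (t+1) i) - Bd (y (t+1) i) (x (t+1) j))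
          = (∑ i, ∑ j, P i j * Bd xstar (x (t+1) j))
            - (∑ i, ∑ j, P i j * Bd xstar (y (t+1) i))
            - ∑ i, ∑ j, P i j * Bd (y (t+1) i) (x (t+1) j) := by
        have hpt : ∀ (i j : Fin m), P i j * (Bd xstar (x (t+1) j)
            - Bd xstar (y (t+1) i) - Bd (y (t+1) i) (x (t+1) j))
            = P i j * Bd xstar (x (t+1) j) - P i j * Bd xstar (y (t+1) i)
              - P i j * Bd (y (t+1) i) (x (t+1) j) := fun i j => by ring
        rw [Finset.sum_congr rfl fun i _ => Finset.sum_congr rfl fun j _ => hpt i j]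
        simp only [Finset.sum_sub_distrib]
      rw [expand, d1, d2] at hsums
      linarith
    -- (G) assemble everything
    have hDsum : ∑ i, (-⟪ν t i, x (t+1) i - ∑ j, P i j • x (t+1) j⟫)
        = (1/(2*τ)) * ((∑ i, ∑ k, (ν t i k)^2) - (∑ i, ∑ k, (ν (t+1) i k)^2))
          + (τ/2) * ∑ i, ∑ k, ((x (t+1) i - ∑ j, P i j • x (t+1) j) k)^2 := by
      rw [Finset.sum_congr rfl fun i _ => hnu i, Finset.sum_add_distrib,
        ← Finset.mul_sum, ← Finset.mul_sum, Finset.sum_sub_distrib]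
    have hτρ : τ/2 ≤ ρ/2 := by rw [hτ]; linarith
    have hWfin : (τ/2) * ∑ i, ∑ k, ((x (t+1) i - ∑ j, P i j • x (t+1) j) k)^2
        ≤ ρ * ((∑ i, Bd xstar (x (t+1) i)) - (∑ i, Bd xstar (y (t+1) i))) := by
      have hWnn : 0 ≤ ∑ i, ∑ k, ((x (t+1) i - ∑ j, P i j • x (t+1) j) k)^2 :=
        Finset.sum_nonneg fun i _ => Finset.sum_nonneg fun k _ => sq_nonneg _
      have s1 : (τ/2) * ∑ i, ∑ k, ((x (t+1) i - ∑ j, P i j • x (t+1) j) k)^2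
          ≤ (τ/2) * (2 * ∑ i, ∑ j, P i j * Bd (y (t+1) i) (x (t+1) j)) :=
        mul_le_mul_of_nonneg_left (hW.trans hWM) (by positivity)
      have s2 : (τ/2) * (2 * ∑ i, ∑ j, P i j * Bd (y (t+1) i) (x (t+1) j))
          = τ * ∑ i, ∑ j, P i j * Bd (y (t+1) i) (x (t+1) j) := by ring
      have s3 : τ * ∑ i, ∑ j, P i j * Bd (y (t+1) i) (x (t+1) j)
          ≤ ρ * ∑ i, ∑ j, P i j * Bd (y (t+1) i) (x (t+1) j) := by
        apply mul_le_mul_of_nonneg_right _ hMnn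
        rw [hτ]; linarith
      have s4 : ρ * ∑ i, ∑ j, P i j * Bd (y (t+1) i) (x (t+1) j)
          ≤ ρ * ((∑ i, Bd xstar (x (t+1) i)) - (∑ i, Bd xstar (y (t+1) i))) :=
        mul_le_mul_of_nonneg_left hMir hρ.le
      linarith
    have hfinal : (∑ i, (f i (x (t+1) i) - f i xstar))
        ≤ (1/(2*τ)) * ((∑ i, ∑ k, (ν t i k)^2) - (∑ i, ∑ k, (ν (t+1) i k)^2))
          + ρ * ((∑ i, Bd xstar (y t i)) - (∑ i, Bd xstar (y (t+1) i)))
          + ((∑ i, δ i * Bd xstar (x t i)) - (∑ i, δ i * Bd xstar (x (t+1) i))) := by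
      have hDS2 : (∑ i, ⟪-ν t i + (∑ j, P i j • ν t j), x (t+1) i - xstar⟫)
          = ∑ i, (-⟪ν t i, x (t+1) i - ∑ j, P i j • x (t+1) j⟫) := by
        rw [hDS, ← Finset.sum_neg_distrib]
      rw [hDS2, hDsum] at sumA
      linarith
    simp only [hL]
    linarith [hfinal]
  have telescope : ∑ t ∈ Finset.range T, (∑ i, (f i (x (t+1) i) - f i xstar))
      ≤ L 0 - L T :=
    (Finset.sum_le_sum fun t _ => step t).trans_eq (Finset.sum_range_sub' L T)
  have hLT : 0 ≤ L T := by
    have h1 : 0 ≤ ∑ i, ∑ k, (ν T i k)^2 :=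
      Finset.sum_nonneg fun i _ => Finset.sum_nonneg fun k _ => sq_nonneg _
    have h2 : 0 ≤ ∑ i, Bd xstar (y T i) :=
      Finset.sum_nonneg fun i _ => Bd_nonneg hxstar.1 (hypos T i)
    have h3 : 0 ≤ ∑ i, δ i * Bd xstar (x T i) :=
      Finset.sum_nonneg fun i _ => mul_nonneg (hδ i) (Bd_nonneg hxstar.1 (hxpos T i))
    have h4 : (0:ℝ) ≤ 1/(2*τ) := by positivity
    have := add_nonneg (add_nonneg (mul_nonneg h4 h1) (mul_nonneg hρ.le h2)) h3
    simpa [hL] using this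
  have hL0 : L 0 ≤ (m : ℝ) * (ρ + δmax) * Real.log n := by
    have hlogn : 0 ≤ Real.log n := Real.log_nonneg (by exact_mod_cast hn.trans' one_le_two)
    have hνz : (∑ i, ∑ k, (ν 0 i k)^2) = 0 := by
      refine Finset.sum_eq_zero fun i _ => Finset.sum_eq_zero fun k _ => ?_
      rw [hν0 i]
      show ((0 : EuclideanSpace ℝ (Fin n)) k)^2 = 0
      norm_num
    have hyu : ∀ i : Fin m, Bd xstar (y 0 i) ≤ Real.log n := by
      intro i
      have : y 0 i = (WithLp.toLp 2 (fun _ => 1 / (n : ℝ)) : EuclideanSpace ℝ (Fin n)) := PiLp.ext (hy0 i)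
      rw [this]
      exact Bd_uniform_le (by omega) hxstar
    have hxu : ∀ i : Fin m, Bd xstar (x 0 i) ≤ Real.log n := by
      intro i
      have : x 0 i = (WithLp.toLp 2 (fun _ => 1 / (n : ℝ)) : EuclideanSpace ℝ (Fin n)) := PiLp.ext (hx0 i)
      rw [this]
      exact Bd_uniform_le (by omega) hxstar
    have h2 : ∑ i, Bd xstar (y 0 i) ≤ (m:ℝ) * Real.log n := by
      calc ∑ i, Bd xstar (y 0 i) ≤ ∑ _i : Fin m, Real.log n := Finset.sum_le_sum fun i _ => hyu i
        _ = (m:ℝ) * Real.log n := by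
          rw [Finset.sum_const, Finset.card_univ, Fintype.card_fin, nsmul_eq_mul]
    have h3 : ∑ i, δ i * Bd xstar (x 0 i) ≤ (m:ℝ) * (δmax * Real.log n) := by
      calc ∑ i, δ i * Bd xstar (x 0 i) ≤ ∑ _i : Fin m, δmax * Real.log n := by
            refine Finset.sum_le_sum fun i _ => ?_
            calc δ i * Bd xstar (x 0 i) ≤ δ i * Real.log n :=
                  mul_le_mul_of_nonneg_left (hxu i) (hδ i)
              _ ≤ δmax * Real.log n :=
                  mul_le_mul_of_nonneg_right (hδmax.2 ⟨i, rfl⟩) hlogn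
        _ = (m:ℝ) * (δmax * Real.log n) := by
          rw [Finset.sum_const, Finset.card_univ, Fintype.card_fin, nsmul_eq_mul]
    have h2' : ρ * (∑ i, Bd xstar (y 0 i)) ≤ ρ * ((m:ℝ) * Real.log n) :=
      mul_le_mul_of_nonneg_left h2 hρ.le
    simp only [hL, hνz]
    nlinarith
  have main : ∑ t ∈ Finset.range T, (∑ i, (f i (x (t+1) i) - f i xstar))
      ≤ (m : ℝ) * (ρ + δmax) * Real.log n := by linarith
  -- Jensen step
  have hTpos : (0:ℝ) < (T:ℝ) := by exact_mod_cast hT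
  have hIcc : ∀ (g : ℕ → ℝ), ∑ t ∈ Finset.Icc 1 T, g t = ∑ t ∈ Finset.range T, g (t+1) := by
    intro g
    rw [← Finset.Ico_add_one_right_eq_Icc, Finset.sum_Ico_eq_sum_range]
    simp [add_comm]
  have hJ : ∀ i, f i (xbar i) ≤ ∑ t ∈ Finset.Icc 1 T, (1/(T:ℝ)) * f i (x t i) := by
    intro i
    have hw : ∑ _t ∈ Finset.Icc 1 T, (1/(T:ℝ)) = 1 := by
      rw [Finset.sum_const, Nat.card_Icc]
      simp only [Nat.add_sub_cancel, nsmul_eq_mul]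
      field_simp
    have hmain := (hf i).map_sum_le (t := Finset.Icc 1 T) (w := fun _ => 1/(T:ℝ))
        (p := fun t => x t i) (fun _ _ => by positivity) hw (fun _ _ => Set.mem_univ _)
    calc f i (xbar i) = f i (∑ t ∈ Finset.Icc 1 T, (1/(T:ℝ)) • x t i) := by
          rw [hxbar i, Finset.smul_sum]
      _ ≤ ∑ t ∈ Finset.Icc 1 T, (1/(T:ℝ)) • f i (x t i) := hmain
      _ = ∑ t ∈ Finset.Icc 1 T, (1/(T:ℝ)) * f i (x t i) := rfl
  have sum1 : (∑ i, f i (xbar i)) - ∑ i, f i xstar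
      ≤ (1/(T:ℝ)) * ∑ t ∈ Finset.range T, (∑ i, (f i (x (t+1) i) - f i xstar)) := by
    have e0 : ∑ t ∈ Finset.range T, (∑ i, (f i (x (t+1) i) - f i xstar))
        = ∑ t ∈ Finset.Icc 1 T, (∑ i, (f i (x t i) - f i xstar)) :=
      (hIcc fun t => ∑ i, (f i (x t i) - f i xstar)).symm
    have e1 : ∑ t ∈ Finset.Icc 1 T, (∑ i, (f i (x t i) - f i xstar))
        = (∑ t ∈ Finset.Icc 1 T, ∑ i, f i (x t i)) - (T:ℝ) * ∑ i, f i xstar := by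
      calc ∑ t ∈ Finset.Icc 1 T, (∑ i, (f i (x t i) - f i xstar))
          = ∑ t ∈ Finset.Icc 1 T, ((∑ i, f i (x t i)) - ∑ i, f i xstar) :=
            Finset.sum_congr rfl fun t _ => Finset.sum_sub_distrib _ _
        _ = (∑ t ∈ Finset.Icc 1 T, ∑ i, f i (x t i))
            - ∑ _t ∈ Finset.Icc 1 T, ∑ i, f i xstar := Finset.sum_sub_distrib _ _
        _ = (∑ t ∈ Finset.Icc 1 T, ∑ i, f i (x t i)) - (T:ℝ) * ∑ i, f i xstar := by
            rw [Finset.sum_const, Nat.card_Icc]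
            simp [nsmul_eq_mul]
    have e2 : ∑ i, f i (xbar i) ≤ (1/(T:ℝ)) * ∑ t ∈ Finset.Icc 1 T, ∑ i, f i (x t i) := by
      calc ∑ i, f i (xbar i) ≤ ∑ i, ∑ t ∈ Finset.Icc 1 T, (1/(T:ℝ)) * f i (x t i) :=
            Finset.sum_le_sum fun i _ => hJ i
        _ = (1/(T:ℝ)) * ∑ t ∈ Finset.Icc 1 T, ∑ i, f i (x t i) := by
            rw [Finset.sum_comm, Finset.mul_sum]
            exact Finset.sum_congr rfl fun t _ => by rw [Finset.mul_sum]
    rw [e0, e1, mul_sub]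
    have : (1/(T:ℝ)) * ((T:ℝ) * ∑ i, f i xstar) = ∑ i, f i xstar := by
      field_simp
    rw [this]
    linarith
  have final := sum1.trans (mul_le_mul_of_nonneg_left main (by positivity))
  calc (∑ i, f i (xbar i)) - ∑ i, f i xstar
      ≤ (1/(T:ℝ)) * ((m : ℝ) * (ρ + δmax) * Real.log n) := final
    _ = (m : ℝ) * (ρ + δmax) * Real.log n / (T:ℝ) := by ring
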